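/- arXiv:2309.09299 — 2 statements merged into one kernel-verified Lean document; each statement's English description precedes it below -/
import Mathlib

section
/- In the static binary choice panel model with stationary errors and binary covariate, the bound functions L(X,Y) = v(X,1)·Ȳ(X,Y,1) − v(X,0)·Ȳ(X,Y,0) − (1 − v(X,0)) and U(X,Y) = v(X,1)·Ȳ(X,Y,1) − v(X,0)·Ȳ(X,Y,0) + (1 − v(X,1)) satisfy E[L(X,Y) | X, A] ≤ m(A) ≤ E[U(X,Y) | X, A], where m(A) = E[Y_t | X_t=1, A] − E[Y_t | X_t=0, A]. -/
open MeasureTheory ProbabilityTheory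

set_option maxHeartbeats 1000000 in
/-- In the static binary choice panel model `Y_t = g(X_t, A, ε_t)` with `g`
constant over `t`, binary covariate `X_t`, outcomes in `{0,1}`, and errors `ε_t` whose
conditional distribution given `(X, A)` is stationary over `t` (encoded as
`(X, A, ε_t) =_d (X, A, ε_{t'})`), the bound functions
`L = v(X,1)·Ȳ(X,Y,1) − v(X,0)·Ȳ(X,Y,0) − (1 − v(X,0))` and
`U = v(X,1)·Ȳ(X,Y,1) − v(X,0)·Ȳ(X,Y,0) + (1 − v(X,1))` satisfy
`E[L(X,Y) | X, A] ≤ m(A) ≤ E[U(X,Y) | X, A]` almost surely, where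
`m(A) = E[Y_t | X_t = 1, A] − E[Y_t | X_t = 0, A]` (equal, under the structural model, to the
conditional expectation of `g(1,A,ε_t) − g(0,A,ε_t)` given `(X,A)`, for every `t`). -/
theorem stmt_11 {Ω 𝒜 ℰ : Type*} [MeasurableSpace Ω] [MeasurableSpace 𝒜] [MeasurableSpace ℰ]
    (μ : Measure Ω) [IsProbabilityMeasure μ]
    (T : ℕ) (hT : 0 < T)
    (X : Fin T → Ω → Bool) (A : Ω → 𝒜) (ε : Fin T → Ω → ℰ)
    (g : Bool → 𝒜 → ℰ → ℝ)
    (hg01 : ∀ d a e, g d a e = 0 ∨ g d a e = 1)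
    (hXmeas : ∀ t, Measurable (X t)) (hAmeas : Measurable A) (hεmeas : ∀ t, Measurable (ε t))
    (hgmeas : ∀ d, Measurable (fun p : 𝒜 × ℰ => g d p.1 p.2))
    (Y : Fin T → Ω → ℝ)
    (hY : ∀ t ω, Y t ω = g (X t ω) (A ω) (ε t ω))
    (hstat : ∀ t t' : Fin T,
      IdentDistrib (fun ω => ((fun s => X s ω), A ω, ε t ω))
        (fun ω => ((fun s => X s ω), A ω, ε t' ω)) μ μ)
    (mXA : MeasurableSpace Ω)
    (hmXA : mXA = MeasurableSpace.comap (fun ω => ((fun t => X t ω), A ω)) inferInstance)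
    (mbar : Ω → ℝ)
    (hmbar : ∀ t : Fin T,
      mbar =ᵐ[μ] μ[(fun ω => g true (A ω) (ε t ω) - g false (A ω) (ε t ω)) | mXA])
    (v : Bool → Ω → ℝ)
    (hv : ∀ d ω, v d ω = if ∃ t, X t ω = d then (1 : ℝ) else 0)
    (Ybar : Bool → Ω → ℝ)
    (hYbar : ∀ d ω, Ybar d ω =
      if (Finset.univ.filter (fun t => X t ω = d)).Nonempty then
        (∑ t ∈ Finset.univ.filter (fun t => X t ω = d), Y t ω) /
          (Finset.univ.filter (fun t => X t ω = d)).card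
      else 0)
    (L U : Ω → ℝ)
    (hL : ∀ ω, L ω = v true ω * Ybar true ω - v false ω * Ybar false ω - (1 - v false ω))
    (hU : ∀ ω, U ω = v true ω * Ybar true ω - v false ω * Ybar false ω + (1 - v true ω)) :
    ∀ᵐ ω ∂μ, (μ[L | mXA]) ω ≤ mbar ω ∧ mbar ω ≤ (μ[U | mXA]) ω := by
  subst hmXA
  classical
  set Z : Ω → (Fin T → Bool) × 𝒜 := fun ω => ((fun t => X t ω), A ω) with hZdef
  have hZ : Measurable Z := (measurable_pi_lambda _ fun t => hXmeas t).prodMk hAmeas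
  have hm : MeasurableSpace.comap Z inferInstance ≤ ‹MeasurableSpace Ω› := hZ.comap_le
  haveI : SigmaFinite (μ.trim hm) := by
    haveI := isFiniteMeasure_trim (μ := μ) hm
    infer_instance
  set s₀ : Fin T := ⟨0, hT⟩ with hs₀
  set f : Bool → Fin T → Ω → ℝ := fun d t ω => g d (A ω) (ε t ω) with hfdef
  have hfmeas : ∀ d t, Measurable (f d t) := fun d t =>
    (hgmeas d).comp (hAmeas.prodMk (hεmeas t))
  have hf01 : ∀ d t ω, f d t ω = 0 ∨ f d t ω = 1 := fun d t ω => hg01 _ _ _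
  have hfbd : ∀ d t ω, 0 ≤ f d t ω ∧ f d t ω ≤ 1 := by
    intro d t ω; rcases hf01 d t ω with h | h <;> rw [h] <;> norm_num
  have hfint : ∀ d t, Integrable (f d t) μ := by
    intro d t
    refine (integrable_const (1 : ℝ)).mono' (hfmeas d t).aestronglyMeasurable ?_
    filter_upwards with ω
    rw [Real.norm_eq_abs, abs_le]
    exact ⟨by linarith [(hfbd d t ω).1], (hfbd d t ω).2⟩
  -- Step A : stationarity ⇒ all conditional expectations agree
  have hkey : ∀ d t, (μ[f d t | MeasurableSpace.comap Z inferInstance]) =ᵐ[μ]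
      μ[f d s₀ | MeasurableSpace.comap Z inferInstance] := by
    intro d t
    refine (ae_eq_condExp_of_forall_setIntegral_eq hm (hfint d t)
      (fun B _ _ => integrable_condExp.integrableOn) ?_
      stronglyMeasurable_condExp.aestronglyMeasurable).symm
    intro B hB _
    rw [setIntegral_condExp hm (hfint d s₀) hB]
    obtain ⟨C, hC, rfl⟩ := hB
    have key : ∀ u : Fin T, ∫ ω in Z ⁻¹' C, f d u ω ∂μ =
        ∫ ω, Set.indicator C (fun _ => (1 : ℝ)) (Z ω) * f d u ω ∂μ := by
      intro u
      rw [← integral_indicator (hZ hC)]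
      congr 1
      ext ω
      by_cases h : Z ω ∈ C <;> simp [Set.indicator, h]
    rw [key s₀, key t]
    have hφ : Measurable (fun p : (Fin T → Bool) × 𝒜 × ℰ =>
        Set.indicator C (fun _ => (1 : ℝ)) (p.1, p.2.1) * g d p.2.1 p.2.2) := by
      refine Measurable.mul ?_ ((hgmeas d).comp measurable_snd)
      exact (measurable_const.indicator hC).comp
        (measurable_fst.prodMk (measurable_fst.comp measurable_snd))
    exact ((hstat s₀ t).comp hφ).integral_eq
  have hZm : Measurable[MeasurableSpace.comap Z inferInstance] Z :=
    measurable_iff_comap_le.mpr le_rfl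
  -- the weights c d t
  set c : Bool → Fin T → Ω → ℝ := fun d t ω =>
    if X t ω = d then ((Finset.univ.filter (fun u => X u ω = d)).card : ℝ)⁻¹ else 0 with hcdef
  have hcmeasm : ∀ d t, Measurable[MeasurableSpace.comap Z inferInstance] (c d t) := by
    intro d t
    have e : c d t = (fun b : Fin T → Bool =>
        if b t = d then ((Finset.univ.filter (fun u => b u = d)).card : ℝ)⁻¹ else 0) ∘
        (Prod.fst ∘ Z) := rfl
    rw [e]
    exact (measurable_of_countable _).comp (measurable_fst.comp hZm)
  have hcmeas : ∀ d t, Measurable (c d t) := fun d t => (hcmeasm d t).mono hm le_rfl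
  have hcbd : ∀ d t ω, 0 ≤ c d t ω ∧ c d t ω ≤ 1 := by
    intro d t ω
    rw [hcdef]
    by_cases h : X t ω = d
    · simp only [h, if_pos]
      have hpos : 0 < (Finset.univ.filter (fun u => X u ω = d)).card := by
        refine Finset.card_pos.mpr ⟨t, ?_⟩
        simp [h]
      constructor
      · positivity
      · rw [inv_le_one_iff₀]; right; exact_mod_cast hpos
    · simp [h]
  have hcfint : ∀ d t, Integrable (fun ω => c d t ω * f d t ω) μ := by
    intro d t
    refine (integrable_const (1 : ℝ)).mono'
      ((hcmeas d t).mul (hfmeas d t)).aestronglyMeasurable ?_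
    filter_upwards with ω
    rw [Real.norm_eq_abs, abs_le]
    obtain ⟨hc0, hc1⟩ := hcbd d t ω
    obtain ⟨hf0, hf1⟩ := hfbd d t ω
    constructor
    · nlinarith
    · nlinarith
  -- decomposition of v d * Ybar d
  have hdecomp : ∀ d ω, v d ω * Ybar d ω = ∑ t, c d t ω * f d t ω := by
    intro d ω
    rw [hv, hYbar]
    by_cases hne : (Finset.univ.filter (fun t => X t ω = d)).Nonempty
    · have hex : ∃ t, X t ω = d := by
        obtain ⟨t, ht⟩ := hne
        exact ⟨t, (Finset.mem_filter.mp ht).2⟩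
      rw [if_pos hne, if_pos hex, one_mul]
      have hYf : ∀ t ∈ Finset.univ.filter (fun t => X t ω = d), Y t ω = f d t ω := by
        intro t ht
        rw [hY, hfdef, (Finset.mem_filter.mp ht).2]
      rw [Finset.sum_congr rfl hYf]
      have e : ∀ t : Fin T, c d t ω * f d t ω =
          if X t ω = d then ((Finset.univ.filter (fun u => X u ω = d)).card : ℝ)⁻¹ * f d t ω
          else 0 := by
        intro t; rw [hcdef]; by_cases h : X t ω = d <;> simp [h]
      rw [Finset.sum_congr rfl fun t _ => e t, ← Finset.sum_filter, ← Finset.mul_sum,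
        div_eq_inv_mul]
    · have hex : ¬ ∃ t, X t ω = d := by
        rintro ⟨t, ht⟩
        exact hne ⟨t, by simp [ht]⟩
      rw [if_neg hne, if_neg hex, zero_mul]
      symm
      refine Finset.sum_eq_zero fun t _ => ?_
      have ht : X t ω ≠ d := fun h => hex ⟨t, h⟩
      rw [hcdef]; simp [ht]
  have hsumc : ∀ d ω, ∑ t, c d t ω = v d ω := by
    intro d ω
    rw [hv]
    by_cases hex : ∃ t, X t ω = d
    · rw [if_pos hex]
      have hne : (Finset.univ.filter (fun t => X t ω = d)).Nonempty := by
        obtain ⟨t, ht⟩ := hex; exact ⟨t, by simp [ht]⟩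
      have e : ∀ t : Fin T, c d t ω =
          if X t ω = d then ((Finset.univ.filter (fun u => X u ω = d)).card : ℝ)⁻¹ else 0 := by
        intro t; rw [hcdef]
      rw [Finset.sum_congr rfl fun t _ => e t, ← Finset.sum_filter, Finset.sum_const,
        nsmul_eq_mul, mul_inv_cancel₀]
      exact_mod_cast Finset.card_pos.mpr hne |>.ne'
    · rw [if_neg hex]
      refine Finset.sum_eq_zero fun t _ => ?_
      have ht : X t ω ≠ d := fun h => hex ⟨t, h⟩
      rw [hcdef]; simp [ht]
  -- Step B : conditional expectation of v d * Ybar d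
  have hPint : ∀ d, Integrable (fun ω => v d ω * Ybar d ω) μ := by
    intro d
    have e : (fun ω => v d ω * Ybar d ω) = fun ω => ∑ t, c d t ω * f d t ω := by
      ext ω; exact hdecomp d ω
    rw [e]
    exact integrable_finset_sum _ fun t _ => hcfint d t
  have hB : ∀ d, (μ[fun ω => v d ω * Ybar d ω | MeasurableSpace.comap Z inferInstance]) =ᵐ[μ]
      fun ω => v d ω * (μ[f d s₀ | MeasurableSpace.comap Z inferInstance]) ω := by
    intro d
    have e1 : (fun ω => v d ω * Ybar d ω) = ∑ t : Fin T, fun ω => c d t ω * f d t ω := by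
      ext ω; rw [hdecomp d ω]; simp [Finset.sum_apply]
    rw [e1]
    refine (condExp_finset_sum (fun t _ => hcfint d t) _).trans ?_
    have e2 : ∀ t : Fin T,
        (μ[fun ω => c d t ω * f d t ω | MeasurableSpace.comap Z inferInstance]) =ᵐ[μ]
        fun ω => c d t ω * (μ[f d s₀ | MeasurableSpace.comap Z inferInstance]) ω := by
      intro t
      have h1 : (μ[c d t * f d t | MeasurableSpace.comap Z inferInstance]) =ᵐ[μ]
          c d t * μ[f d t | MeasurableSpace.comap Z inferInstance] :=
        condExp_mul_of_stronglyMeasurable_left (hcmeasm d t).stronglyMeasurable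
          (hcfint d t) (hfint d t)
      refine h1.trans ?_
      filter_upwards [hkey d t] with ω hω
      simp only [Pi.mul_apply, hω]
    have e3 : ∀ᵐ ω ∂μ, ∀ t : Fin T,
        (μ[fun ω => c d t ω * f d t ω | MeasurableSpace.comap Z inferInstance]) ω =
        c d t ω * (μ[f d s₀ | MeasurableSpace.comap Z inferInstance]) ω :=
      ae_all_iff.mpr fun t => e2 t
    filter_upwards [e3] with ω hω
    simp only [Finset.sum_apply]
    rw [Finset.sum_congr rfl fun t _ => hω t, ← Finset.sum_mul, hsumc d ω]
  -- v d is m-measurable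
  have hvmeasm : ∀ d, Measurable[MeasurableSpace.comap Z inferInstance] (v d) := by
    intro d
    have e : v d = (fun b : Fin T → Bool =>
        if ∃ t, b t = d then (1 : ℝ) else 0) ∘ (Prod.fst ∘ Z) := by
      ext ω; rw [hv]; rfl
    rw [e]
    exact (measurable_of_countable _).comp (measurable_fst.comp hZm)
  have hv01 : ∀ d ω, v d ω = 0 ∨ v d ω = 1 := by
    intro d ω; rw [hv]; by_cases h : ∃ t, X t ω = d <;> simp [h]
  have hvint : ∀ d, Integrable (v d) μ := by
    intro d
    refine (integrable_const (1 : ℝ)).mono'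
      ((hvmeasm d).mono hm le_rfl).aestronglyMeasurable ?_
    filter_upwards with ω
    rcases hv01 d ω with h | h <;> rw [h] <;> norm_num
  -- abbreviation
  set q : Bool → Ω → ℝ := fun d => μ[f d s₀ | MeasurableSpace.comap Z inferInstance] with hqdef
  have hq0 : ∀ d, 0 ≤ᵐ[μ] q d := fun d =>
    condExp_nonneg (Filter.Eventually.of_forall fun ω => (hfbd d s₀ ω).1)
  have hq1 : ∀ d, q d ≤ᵐ[μ] fun _ => (1 : ℝ) := by
    intro d
    have h1 : q d ≤ᵐ[μ] μ[fun _ => (1 : ℝ) | MeasurableSpace.comap Z inferInstance] :=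
      condExp_mono (hfint d s₀) (integrable_const 1)
        (Filter.Eventually.of_forall fun ω => (hfbd d s₀ ω).2)
    refine h1.trans ?_
    rw [condExp_const hm]
  -- conditional expectations of the correction terms
  have hWfalse : (μ[(fun _ => (1 : ℝ)) - v false | MeasurableSpace.comap Z inferInstance]) =
      (fun _ => (1 : ℝ)) - v false :=
    condExp_of_stronglyMeasurable hm
      (stronglyMeasurable_const.sub (hvmeasm false).stronglyMeasurable)
      ((integrable_const 1).sub (hvint false))
  have hWtrue : (μ[(fun _ => (1 : ℝ)) - v true | MeasurableSpace.comap Z inferInstance]) =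
      (fun _ => (1 : ℝ)) - v true :=
    condExp_of_stronglyMeasurable hm
      (stronglyMeasurable_const.sub (hvmeasm true).stronglyMeasurable)
      ((integrable_const 1).sub (hvint true))
  have hPsub := condExp_sub (μ := μ) (m := MeasurableSpace.comap Z inferInstance)
    (hPint true) (hPint false)
  have hLce : (μ[L | MeasurableSpace.comap Z inferInstance]) =ᵐ[μ]
      fun ω => v true ω * q true ω - v false ω * q false ω - (1 - v false ω) := by
    have e : L = ((fun ω => v true ω * Ybar true ω) - fun ω => v false ω * Ybar false ω) -
        ((fun _ => (1 : ℝ)) - v false) := by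
      ext ω; simp only [Pi.sub_apply, hL]
    rw [e]
    refine (condExp_sub ((hPint true).sub (hPint false))
      ((integrable_const 1).sub (hvint false)) _).trans ?_
    rw [hWfalse]
    filter_upwards [hPsub, hB true, hB false] with ω h4 hBt hBf
    simp only [Pi.sub_apply] at h4 ⊢
    rw [h4, hBt, hBf]
  have hUce : (μ[U | MeasurableSpace.comap Z inferInstance]) =ᵐ[μ]
      fun ω => v true ω * q true ω - v false ω * q false ω + (1 - v true ω) := by
    have e : U = ((fun ω => v true ω * Ybar true ω) - fun ω => v false ω * Ybar false ω) +
        ((fun _ => (1 : ℝ)) - v true) := by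
      ext ω; simp only [Pi.add_apply, Pi.sub_apply, hU]
    rw [e]
    refine (condExp_add ((hPint true).sub (hPint false))
      ((integrable_const 1).sub (hvint true)) _).trans ?_
    rw [hWtrue]
    filter_upwards [hPsub, hB true, hB false] with ω h4 hBt hBf
    simp only [Pi.add_apply, Pi.sub_apply] at h4 ⊢
    rw [h4, hBt, hBf]
  -- mbar
  have hmb : mbar =ᵐ[μ] fun ω => q true ω - q false ω := by
    refine (hmbar s₀).trans ?_
    have e : (fun ω => g true (A ω) (ε s₀ ω) - g false (A ω) (ε s₀ ω)) =
        f true s₀ - f false s₀ := rfl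
    rw [e]
    filter_upwards [condExp_sub (μ := μ) (m := MeasurableSpace.comap Z inferInstance)
      (hfint true s₀) (hfint false s₀)] with ω hω
    simp only [Pi.sub_apply] at hω
    rw [hω]
  -- conclusion
  filter_upwards [hLce, hUce, hmb, hq0 true, hq0 false, hq1 true, hq1 false]
    with ω hLω hUω hmω hqt0 hqf0 hqt1 hqf1
  rw [hLω, hUω, hmω]
  simp only [Pi.zero_apply] at hqt0 hqf0
  revert hqt0 hqf0 hqt1 hqf1
  generalize q true ω = a
  generalize q false ω = b
  intro hqt0 hqf0 hqt1 hqf1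
  rcases hv01 true ω with h1 | h1 <;> rcases hv01 false ω with h0 | h0 <;>
    rw [h1, h0] <;> constructor <;> nlinarith
end

section
/- In the setting of the previous statement, E[U(X,Y)] − E[L(X,Y)] = E[(1 − v(X,1)) + (1 − v(X,0))] = P(X_t = 0 for all t) + P(X_t = 1 for all t); in particular if X_1,...,X_T are i.i.d. Bernoulli(p) with 0 < p < 1, the width of the bounds equals p^T + (1−p)^T, which decays exponentially in T. -/
open MeasureTheory ProbabilityTheory

/-- In the static binary choice setting with binary covariate, the width of the
analytical bounds satisfies
`E[U(X,Y)] − E[L(X,Y)] = E[(1 − v(X,1)) + (1 − v(X,0))] = P(∀t, X_t = 0) + P(∀t, X_t = 1)`;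
in particular, if `X_1, ..., X_T` are i.i.d. Bernoulli(p) with `0 < p < 1`, the width equals
`p^T + (1−p)^T`, which decays exponentially in `T`. -/
theorem stmt_12 {Ω : Type*} [MeasurableSpace Ω]
    (μ : Measure Ω) [IsProbabilityMeasure μ]
    (T : ℕ) (hT : 0 < T)
    (X : Fin T → Ω → Bool) (hXmeas : ∀ t, Measurable (X t))
    (Y : Fin T → Ω → ℝ) (hY01 : ∀ t ω, Y t ω ∈ Set.Icc (0 : ℝ) 1)
    (v : Bool → Ω → ℝ)
    (hv : ∀ d ω, v d ω = if ∃ t, X t ω = d then (1 : ℝ) else 0)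
    (Ybar : Bool → Ω → ℝ)
    (hYbar : ∀ d ω, Ybar d ω =
      if (Finset.univ.filter (fun t => X t ω = d)).Nonempty then
        (∑ t ∈ Finset.univ.filter (fun t => X t ω = d), Y t ω) /
          (Finset.univ.filter (fun t => X t ω = d)).card
      else 0)
    (L U : Ω → ℝ)
    (hL : ∀ ω, L ω = v true ω * Ybar true ω - v false ω * Ybar false ω - (1 - v false ω))
    (hU : ∀ ω, U ω = v true ω * Ybar true ω - v false ω * Ybar false ω + (1 - v true ω))
    (hLint : Integrable L μ) (hUint : Integrable U μ)
    (p : ℝ) (hp0 : 0 < p) (hp1 : p < 1)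
    (hindep : iIndepFun X μ)
    (hbern : ∀ t, (μ {ω | X t ω = true}).toReal = p) :
    (∫ ω, U ω ∂μ) - (∫ ω, L ω ∂μ)
        = (μ {ω | ∀ t, X t ω = false}).toReal + (μ {ω | ∀ t, X t ω = true}).toReal ∧
      (∫ ω, U ω ∂μ) - (∫ ω, L ω ∂μ) = p ^ T + (1 - p) ^ T := by
  set Af : Set Ω := {ω | ∀ t, X t ω = false} with hAf
  set At : Set Ω := {ω | ∀ t, X t ω = true} with hAt
  have hAfeq : Af = ⋂ t, X t ⁻¹' {false} := by ext ω; simp [hAf, Set.mem_iInter]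
  have hAteq : At = ⋂ t, X t ⁻¹' {true} := by ext ω; simp [hAt, Set.mem_iInter]
  have hAfm : MeasurableSet Af := by
    rw [hAfeq]; exact MeasurableSet.iInter fun t => (hXmeas t) (measurableSet_singleton false)
  have hAtm : MeasurableSet At := by
    rw [hAteq]; exact MeasurableSet.iInter fun t => (hXmeas t) (measurableSet_singleton true)
  -- pointwise identity
  have hUL : ∀ ω, U ω - L ω
      = Af.indicator (fun _ => (1:ℝ)) ω + At.indicator (fun _ => (1:ℝ)) ω := by
    intro ω
    have hbase : U ω - L ω = (1 - v true ω) + (1 - v false ω) := by rw [hU, hL]; ring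
    rw [hbase, hv, hv]
    by_cases hf : ∀ t, X t ω = false
    · have ht : ¬ ∀ t, X t ω = true := fun h => by
        have := (hf ⟨0, hT⟩).symm.trans (h ⟨0, hT⟩); simp at this
      have h1 : ¬ ∃ t, X t ω = true := by
        push_neg; intro t; simp [hf t]
      have h2 : ∃ t, X t ω = false := ⟨⟨0, hT⟩, hf _⟩
      rw [if_neg h1, if_pos h2,
        Set.indicator_of_mem (show ω ∈ Af from hf),
        Set.indicator_of_notMem (show ω ∉ At from ht)]
      ring
    · by_cases ht : ∀ t, X t ω = true
      · have h1 : ∃ t, X t ω = true := ⟨⟨0, hT⟩, ht _⟩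
        have h2 : ¬ ∃ t, X t ω = false := by
          push_neg; intro t; simp [ht t]
        rw [if_pos h1, if_neg h2,
          Set.indicator_of_notMem (show ω ∉ Af from hf),
          Set.indicator_of_mem (show ω ∈ At from ht)]
        ring
      · have h1 : ∃ t, X t ω = true := by
          push_neg at hf; obtain ⟨t, htf⟩ := hf
          exact ⟨t, by simpa [Bool.not_eq_false] using htf⟩
        have h2 : ∃ t, X t ω = false := by
          push_neg at ht; obtain ⟨t, htt⟩ := ht
          exact ⟨t, by simpa [Bool.not_eq_true] using htt⟩
        rw [if_pos h1, if_pos h2,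
          Set.indicator_of_notMem (show ω ∉ Af from hf),
          Set.indicator_of_notMem (show ω ∉ At from ht)]
        ring
  -- first equality
  have hint1 : Integrable (Af.indicator (fun _ => (1:ℝ))) μ :=
    (integrable_const (1:ℝ)).indicator hAfm
  have hint2 : Integrable (At.indicator (fun _ => (1:ℝ))) μ :=
    (integrable_const (1:ℝ)).indicator hAtm
  have hmain : (∫ ω, U ω ∂μ) - (∫ ω, L ω ∂μ) = (μ Af).toReal + (μ At).toReal := by
    rw [← integral_sub hUint hLint]
    calc ∫ ω, (U ω - L ω) ∂μ
        = ∫ ω, (Af.indicator (fun _ => (1:ℝ)) ω + At.indicator (fun _ => (1:ℝ)) ω) ∂μ := by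
          exact integral_congr_ae (Filter.Eventually.of_forall hUL)
      _ = (∫ ω, Af.indicator (fun _ => (1:ℝ)) ω ∂μ)
            + ∫ ω, At.indicator (fun _ => (1:ℝ)) ω ∂μ := integral_add hint1 hint2
      _ = (μ Af).toReal + (μ At).toReal := by
          rw [integral_indicator hAfm, integral_indicator hAtm]
          simp [Measure.restrict_apply_univ]
          rfl
  refine ⟨hmain, ?_⟩
  -- independence computations
  have hmeasTrue : ∀ t : Fin T,
      MeasurableSet[(inferInstance : MeasurableSpace Bool).comap (X t)] (X t ⁻¹' {true}) :=
    fun t => ⟨{true}, measurableSet_singleton true, rfl⟩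
  have hmeasFalse : ∀ t : Fin T,
      MeasurableSet[(inferInstance : MeasurableSpace Bool).comap (X t)] (X t ⁻¹' {false}) :=
    fun t => ⟨{false}, measurableSet_singleton false, rfl⟩
  have hAtprod : μ At = ∏ t : Fin T, μ (X t ⁻¹' {true}) := by
    rw [hAteq]; exact hindep.meas_iInter hmeasTrue
  have hAfprod : μ Af = ∏ t : Fin T, μ (X t ⁻¹' {false}) := by
    rw [hAfeq]; exact hindep.meas_iInter hmeasFalse
  have htrue : ∀ t, (μ (X t ⁻¹' {true})).toReal = p := by
    intro t
    have : X t ⁻¹' {true} = {ω | X t ω = true} := by ext ω; simp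
    rw [this]; exact hbern t
  have hfalse : ∀ t, (μ (X t ⁻¹' {false})).toReal = 1 - p := by
    intro t
    have hc : X t ⁻¹' {false} = {ω | X t ω = true}ᶜ := by
      ext ω; simp [Bool.not_eq_true]
    have hm : MeasurableSet {ω | X t ω = true} := (hXmeas t) (measurableSet_singleton true)
    rw [hc, measure_compl hm (measure_ne_top μ _), measure_univ,
      ENNReal.toReal_sub_of_le prob_le_one (by simp)]
    simp [hbern t]
  have hAtval : (μ At).toReal = p ^ T := by
    rw [hAtprod, ENNReal.toReal_prod]
    simp [htrue]
  have hAfval : (μ Af).toReal = (1 - p) ^ T := by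
    rw [hAfprod, ENNReal.toReal_prod]
    simp [hfalse]
  rw [hmain, hAtval, hAfval]
  ring
end
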